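/- Let T ∈ GL(n+1,ℝ) and a ∈ ℝ^{n+1} be nonzero with ‖T⁻¹(a)‖ < 1. Then the map T̄ₐ : Sⁿ → Sⁿ, T̄ₐ(x) = (a+T(x))/‖a+T(x)‖, is surjective: for every y ∈ Sⁿ there exists t₀ > 0 such that x = t₀T⁻¹(y) − T⁻¹(a) lies on the unit sphere and T̄ₐ(x) = y. -/

import Mathlib

/-- The "affine" map `x ↦ (a + T(x))/‖a + T(x)‖` induced on the unit sphere. -/
noncomputable def affAct {m : ℕ} (A : Matrix (Fin m) (Fin m) ℝ)
    (a x : EuclideanSpace ℝ (Fin m)) : EuclideanSpace ℝ (Fin m) :=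
  ‖a + Matrix.toEuclideanLin A x‖⁻¹ • (a + Matrix.toEuclideanLin A x)

lemma toEucl_comp {m : ℕ} (A B : Matrix (Fin m) (Fin m) ℝ) (x : EuclideanSpace ℝ (Fin m)) :
    Matrix.toEuclideanLin A (Matrix.toEuclideanLin B x) = Matrix.toEuclideanLin (A * B) x := by
  simp [Matrix.toEuclideanLin_apply, Matrix.mulVec_mulVec]

lemma toEucl_one {m : ℕ} (x : EuclideanSpace ℝ (Fin m)) :
    Matrix.toEuclideanLin (1 : Matrix (Fin m) (Fin m) ℝ) x = x := by
  simp [Matrix.toEuclideanLin_apply]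

theorem stmt10 (n : ℕ) (T : GL (Fin (n + 1)) ℝ) (a : EuclideanSpace ℝ (Fin (n + 1)))
    (ha : a ≠ 0)
    (hlt : ‖Matrix.toEuclideanLin ((T⁻¹ : GL (Fin (n + 1)) ℝ) : Matrix (Fin (n + 1)) (Fin (n + 1)) ℝ) a‖ < 1) :
    ∀ y : EuclideanSpace ℝ (Fin (n + 1)), ‖y‖ = 1 →
      ∃ t₀ : ℝ, 0 < t₀ ∧
        ‖t₀ • Matrix.toEuclideanLin ((T⁻¹ : GL (Fin (n + 1)) ℝ) : Matrix (Fin (n + 1)) (Fin (n + 1)) ℝ) y -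
          Matrix.toEuclideanLin ((T⁻¹ : GL (Fin (n + 1)) ℝ) : Matrix (Fin (n + 1)) (Fin (n + 1)) ℝ) a‖ = 1 ∧
        affAct (T : Matrix (Fin (n + 1)) (Fin (n + 1)) ℝ) a
          (t₀ • Matrix.toEuclideanLin ((T⁻¹ : GL (Fin (n + 1)) ℝ) : Matrix (Fin (n + 1)) (Fin (n + 1)) ℝ) y -
            Matrix.toEuclideanLin ((T⁻¹ : GL (Fin (n + 1)) ℝ) : Matrix (Fin (n + 1)) (Fin (n + 1)) ℝ) a) = y := by
  intro y hy
  set M := (T : Matrix (Fin (n + 1)) (Fin (n + 1)) ℝ)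
  set N := ((T⁻¹ : GL (Fin (n + 1)) ℝ) : Matrix (Fin (n + 1)) (Fin (n + 1)) ℝ)
  have hMN : M * N = 1 := T.mul_inv
  set v := Matrix.toEuclideanLin N y with hv
  set w := Matrix.toEuclideanLin N a with hw
  have hAv : Matrix.toEuclideanLin M v = y := by
    rw [hv, toEucl_comp, hMN, toEucl_one]
  have hAw : Matrix.toEuclideanLin M w = a := by
    rw [hw, toEucl_comp, hMN, toEucl_one]
  have hvne : v ≠ 0 := by
    intro h
    rw [h, map_zero] at hAv
    rw [← hAv] at hy
    simp at hy
  have hvpos : 0 < ‖v‖ := norm_pos_iff.mpr hvne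
  -- IVT to find t₀
  set f : ℝ → ℝ := fun t => ‖t • v - w‖ with hf
  have hcont : Continuous f := by fun_prop
  set Mb : ℝ := (1 + ‖w‖) / ‖v‖ with hMb
  have hfM : 1 ≤ f Mb := by
    have h1 : Mb * ‖v‖ - ‖w‖ = 1 := by
      rw [hMb, div_mul_cancel₀ _ (ne_of_gt hvpos)]; ring
    have h2 : Mb * ‖v‖ - ‖w‖ ≤ ‖Mb • v - w‖ := by
      have := norm_sub_norm_le (Mb • v) w
      rw [norm_smul, Real.norm_eq_abs] at this
      have hMbpos : 0 ≤ Mb := by positivity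
      rw [abs_of_nonneg hMbpos] at this
      linarith
    simpa [hf, h1] using h2
  have hf0 : f 0 < 1 := by simpa [hf] using hlt
  obtain ⟨t₀, ht₀mem, ht₀⟩ := intermediate_value_Icc (by positivity : (0:ℝ) ≤ Mb)
    hcont.continuousOn (Set.mem_Icc.mpr ⟨le_of_lt hf0, hfM⟩)
  have ht₀pos : 0 < t₀ := by
    rcases lt_or_eq_of_le ht₀mem.1 with h | h
    · exact h
    · exfalso; rw [← h] at ht₀; rw [ht₀] at hf0; exact lt_irrefl _ hf0
  refine ⟨t₀, ht₀pos, ht₀, ?_⟩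
  have hkey : a + Matrix.toEuclideanLin M (t₀ • v - w) = t₀ • y := by
    rw [map_sub, map_smul, hAv, hAw]
    abel
  rw [affAct, hkey, norm_smul, Real.norm_eq_abs, abs_of_pos ht₀pos, hy, mul_one,
    smul_smul, inv_mul_cancel₀ (ne_of_gt ht₀pos), one_smul]
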